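/- Every polynomial W_n in a (1,0)-sequence (W_0 = 1, W_1 = x, W_n = (ax+b)W_{n-1} + d·W_{n-2}, a > 0, b ≥ 0, d < 0) has exactly n distinct real roots, and for every n ≥ 0 the zero-set R_{n+1} interlaces R_n: writing R_n = {ξ_{n,1} < ⋯ < ξ_{n,n}}, one has ξ_{n+1,1} < ξ_{n,1} < ξ_{n+1,2} < ξ_{n,2} < ⋯ < ξ_{n,n} < ξ_{n+1,n+1}. -/

import Mathlib

open Polynomial Finset

private lemma stmt13_uniq {n : ℕ} {u v : Fin n → ℝ} (hu : StrictMono u) (hv : StrictMono v)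
    (h : ∀ x, (∃ i, x = u i) ↔ ∃ i, x = v i) : u = v := by
  classical
  set s : Finset ℝ := Finset.univ.image u with hs
  have hcard : s.card = n := by
    rw [hs, Finset.card_image_of_injective _ hu.injective, Finset.card_univ, Fintype.card_fin]
  have h1 : u = s.orderEmbOfFin hcard :=
    Finset.orderEmbOfFin_unique hcard
      (fun x => Finset.mem_image_of_mem _ (Finset.mem_univ x)) hu
  have h2 : v = s.orderEmbOfFin hcard := by
    refine Finset.orderEmbOfFin_unique hcard (fun x => ?_) hv
    obtain ⟨i, hi⟩ := (h (v x)).2 ⟨x, rfl⟩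
    rw [hi]
    exact Finset.mem_image_of_mem _ (Finset.mem_univ i)
  rw [h1, h2]

private lemma stmt13_sign {n k : ℕ} (u : Fin n → ℝ) (t : ℝ)
    (h1 : ∀ j : Fin n, (j : ℕ) < k → u j < t) (h2 : ∀ j : Fin n, k ≤ (j : ℕ) → t < u j) :
    0 < (-1 : ℝ) ^ (n - k) * ∏ j, (t - u j) := by
  classical
  have hsplit := Finset.prod_filter_mul_prod_filter_not Finset.univ
    (fun j : Fin n => (j : ℕ) < k) (fun j => t - u j)
  have hpos : 0 < ∏ j ∈ Finset.univ.filter (fun j : Fin n => (j : ℕ) < k), (t - u j) :=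
    Finset.prod_pos fun j hj => sub_pos.2 (h1 j (by simpa using hj))
  have hcard : (Finset.univ.filter (fun j : Fin n => ¬ (j : ℕ) < k)).card = n - k := by
    have : (Finset.univ.filter (fun j : Fin n => ¬ (j : ℕ) < k)).card
        = ((Finset.univ : Finset (Fin n)).map Fin.valEmbedding |>.filter (fun j => ¬ j < k)).card := by
      rw [Finset.filter_map, Finset.card_map]
      rfl
    rw [this, Fin.map_valEmbedding_univ]
    have : (Finset.Iio n).filter (fun j => ¬ j < k) = Finset.Ico k n := by
      ext x; simp [Finset.mem_filter, Finset.mem_Iio, Finset.mem_Ico]; omega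
    rw [this, Nat.card_Ico]
  have hneg : (-1 : ℝ) ^ (n - k) *
      ∏ j ∈ Finset.univ.filter (fun j : Fin n => ¬ (j : ℕ) < k), (t - u j)
      = ∏ j ∈ Finset.univ.filter (fun j : Fin n => ¬ (j : ℕ) < k), (u j - t) := by
    rw [← hcard, ← Finset.prod_const, ← Finset.prod_mul_distrib]
    exact Finset.prod_congr rfl fun j _ => by ring
  have hpos2 : 0 < ∏ j ∈ Finset.univ.filter (fun j : Fin n => ¬ (j : ℕ) < k), (u j - t) :=
    Finset.prod_pos fun j hj => sub_pos.2 (h2 j (by simpa using (Finset.mem_filter.1 hj).2))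
  calc (0:ℝ) < (∏ j ∈ Finset.univ.filter (fun j : Fin n => (j : ℕ) < k), (t - u j))
        * ((-1 : ℝ) ^ (n - k) * ∏ j ∈ Finset.univ.filter (fun j : Fin n => ¬ (j : ℕ) < k), (t - u j)) := by
        rw [hneg]; exact mul_pos hpos hpos2
    _ = (-1 : ℝ) ^ (n - k) * ∏ j, (t - u j) := by rw [← hsplit]; ring

private lemma stmt13_ivt (p : ℝ[X]) {x y : ℝ} (hxy : x < y) (h : eval x p * eval y p < 0) :
    ∃ z, z ∈ Set.Ioo x y ∧ eval z p = 0 := by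
  have hc : ContinuousOn (fun t => eval t p) (Set.Icc x y) := p.continuous.continuousOn
  rcases mul_neg_iff.1 h with ⟨h1, h2⟩ | ⟨h1, h2⟩
  · obtain ⟨z, hz, hz0⟩ := intermediate_value_Ioo' hxy.le hc (Set.mem_Ioo.2 ⟨h2, h1⟩)
    exact ⟨z, hz, hz0⟩
  · obtain ⟨z, hz, hz0⟩ := intermediate_value_Ioo hxy.le hc (Set.mem_Ioo.2 ⟨h1, h2⟩)
    exact ⟨z, hz, hz0⟩

private lemma stmt13_spos {k : ℕ} {x y : ℝ} (h1 : 0 < (-1:ℝ)^k * x) (h2 : 0 < (-1:ℝ)^k * y) :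
    0 < x * y := by
  have hsq : ((-1:ℝ)^k) * ((-1:ℝ)^k) = 1 := by
    rw [← pow_add]; exact Even.neg_one_pow ⟨k, rfl⟩
  have := mul_pos h1 h2
  calc (0:ℝ) < ((-1:ℝ)^k * x) * ((-1:ℝ)^k * y) := this
    _ = ((-1:ℝ)^k * (-1:ℝ)^k) * (x * y) := by ring
    _ = x * y := by rw [hsq, one_mul]

private lemma stmt13_sneg {k : ℕ} {x y : ℝ} (h1 : 0 < (-1:ℝ)^(k+1) * x) (h2 : 0 < (-1:ℝ)^k * y) :
    x * y < 0 := by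
  have hsq : ((-1:ℝ)^k) * ((-1:ℝ)^k) = 1 := by
    rw [← pow_add]; exact Even.neg_one_pow ⟨k, rfl⟩
  have h3 := mul_pos h1 h2
  have : ((-1:ℝ)^(k+1) * x) * ((-1:ℝ)^k * y) = -(x * y) := by
    rw [pow_succ]
    calc ((-1:ℝ)^k * -1 * x) * ((-1:ℝ)^k * y) = ((-1:ℝ)^k * (-1:ℝ)^k) * (-(x*y)) := by ring
      _ = -(x*y) := by rw [hsq, one_mul]
  linarith [this ▸ h3]

private lemma stmt13_deg {m : ℕ} {c : ℝ} (hc : c ≠ 0) (u : Fin m → ℝ) :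
    (C c * ∏ j, (X - C (u j))).degree = m ∧ (C c * ∏ j, (X - C (u j))).leadingCoeff = c := by
  have hm : (∏ j, (X - C (u j))).Monic :=
    monic_prod_of_monic _ _ fun j _ => monic_X_sub_C _
  have hdeg : (∏ j : Fin m, (X - C (u j))).natDegree = m := by
    rw [natDegree_prod _ _ fun j _ => X_sub_C_ne_zero (u j)]
    simp
  constructor
  · rw [degree_C_mul hc, degree_eq_natDegree hm.ne_zero, hdeg]
  · rw [leadingCoeff_mul, leadingCoeff_C, hm.leadingCoeff, mul_one]


private lemma stmt13_rooteq {m : ℕ} {c : ℝ} (hc : c ≠ 0) (u : Fin m → ℝ) (x : ℝ) :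
    eval x (C c * ∏ j, (X - C (u j))) = 0 ↔ ∃ i, x = u i := by
  simp [eval_prod, Finset.prod_eq_zero_iff, sub_eq_zero, hc]

private lemma stmt13_main (a b d : ℝ) (ha : 0 < a) (hb : 0 ≤ b) (hd : d < 0)
    (W : ℕ → Polynomial ℝ) (hW0 : W 0 = 1) (hW1 : W 1 = X)
    (hrec : ∀ n, 2 ≤ n → W n = (C a * X + C b) * W (n - 1) + C d * W (n - 2)) :
    ∀ n : ℕ, ∃ uv : (Fin n → ℝ) × (Fin (n + 1) → ℝ),
      StrictMono uv.1 ∧ StrictMono uv.2 ∧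
      (∃ c : ℝ, 0 < c ∧ W n = C c * ∏ j, (X - C (uv.1 j))) ∧
      (∃ c : ℝ, 0 < c ∧ W (n + 1) = C c * ∏ j, (X - C (uv.2 j))) ∧
      (∀ i : Fin n, uv.2 i.castSucc < uv.1 i ∧ uv.1 i < uv.2 i.succ) := by
  intro n
  induction n with
  | zero =>
      refine ⟨(Fin.elim0, fun _ => 0), fun i => i.elim0, ?_, ⟨1, one_pos, by simp [hW0]⟩,
        ⟨1, one_pos, by simp [hW1]⟩, fun i => i.elim0⟩
      intro i j hij
      exact absurd (Fin.lt_def.mp hij) (by omega)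
  | succ n ih =>
      classical
      obtain ⟨⟨u, v⟩, hu, hv, ⟨cu, hcu, hWu⟩, ⟨cv, hcv, hWv⟩, hint⟩ := ih
      have hp : W (n + 2) = (C a * X + C b) * W (n + 1) + C d * W n := by
        have := hrec (n + 2) (by omega)
        simpa using this
      have hevalu : ∀ x : ℝ, eval x (W n) = cu * ∏ j, (x - u j) := by
        intro x; rw [hWu]; simp [eval_prod]
      have hevalv : ∀ x : ℝ, eval x (W (n + 1)) = cv * ∏ j, (x - v j) := by
        intro x; rw [hWv]; simp [eval_prod]
      have hrootv : ∀ i : Fin (n + 1), eval (v i) (W (n + 1)) = 0 := by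
        intro i
        have hz : ∏ j : Fin (n + 1), (v i - v j) = 0 :=
          Finset.prod_eq_zero (Finset.mem_univ i) (sub_self _)
        rw [hevalv, hz, mul_zero]
      have hpv : ∀ i : Fin (n + 1),
          eval (v i) (W (n + 2)) = d * (cu * ∏ j, (v i - u j)) := by
        intro i
        rw [hp]
        simp [hrootv i, hevalu]
      have hsign : ∀ i : Fin (n + 1),
          0 < (-1 : ℝ) ^ (n + 1 - (i : ℕ)) * eval (v i) (W (n + 2)) := by
        intro i
        have hi : (i : ℕ) ≤ n := by omega
        have h1 : ∀ j : Fin n, (j : ℕ) < (i : ℕ) → u j < v i := by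
          intro j hj
          have h2 := (hint j).2
          have hle : v j.succ ≤ v i := hv.monotone (by rw [Fin.le_def]; simp; omega)
          linarith
        have h2 : ∀ j : Fin n, (i : ℕ) ≤ (j : ℕ) → v i < u j := by
          intro j hj
          have h3 := (hint j).1
          have hle : v i ≤ v j.castSucc := hv.monotone (by rw [Fin.le_def]; simp; omega)
          linarith
        have h3 := stmt13_sign u (v i) h1 h2
        have h4 : (-1 : ℝ) ^ (n + 1 - (i : ℕ)) * eval (v i) (W (n + 2))
            = (-(d * cu)) * ((-1 : ℝ) ^ (n - (i : ℕ)) * ∏ j, (v i - u j)) := by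
          rw [hpv i, show n + 1 - (i : ℕ) = (n - (i : ℕ)) + 1 by omega, pow_succ]; ring
        rw [h4]
        exact mul_pos (by nlinarith) h3
      have hgex : ∀ i : Fin n,
          ∃ z, z ∈ Set.Ioo (v i.castSucc) (v i.succ) ∧ eval z (W (n + 2)) = 0 := by
        intro i
        apply stmt13_ivt _ (hv (Fin.castSucc_lt_succ (i := i)))
        have e1 := hsign i.castSucc
        have e2 := hsign i.succ
        rw [Fin.coe_castSucc, show n + 1 - (i : ℕ) = (n - (i : ℕ)) + 1 by omega] at e1
        rw [Fin.val_succ, show n + 1 - ((i : ℕ) + 1) = n - (i : ℕ) by omega] at e2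
        exact stmt13_sneg e1 e2
      choose g hg1 hg2 using hgex
      have hgmem : ∀ i : Fin n, v i.castSucc < g i ∧ g i < v i.succ := fun i => hg1 i
      -- degree bookkeeping
      have hdegu := stmt13_deg (ne_of_gt hcu) u
      have hdegv := stmt13_deg (ne_of_gt hcv) v
      have hdWn : (W n).degree = (n : WithBot ℕ) := by rw [hWu]; exact hdegu.1
      have hdWv : (W (n + 1)).degree = ((n + 1 : ℕ) : WithBot ℕ) := by rw [hWv]; exact hdegv.1
      have hlWv : (W (n + 1)).leadingCoeff = cv := by rw [hWv]; exact hdegv.2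
      have hbig : ((C a * X + C b) * W (n + 1)).degree = ((n + 2 : ℕ) : WithBot ℕ) := by
        rw [degree_mul, degree_linear (ne_of_gt ha), hdWv]
        norm_cast
        omega
      have hsmall : (C d * W n).degree < ((C a * X + C b) * W (n + 1)).degree := by
        rw [hbig, degree_C_mul (ne_of_lt hd), hdWn]
        exact_mod_cast (by omega : n < n + 2)
      have hdegp : (W (n + 2)).degree = ((n + 2 : ℕ) : WithBot ℕ) := by
        rw [hp, degree_add_eq_left_of_degree_lt hsmall, hbig]
      have hleadp : (W (n + 2)).leadingCoeff = a * cv := by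
        rw [hp, leadingCoeff_add_of_degree_lt' hsmall, leadingCoeff_mul,
          leadingCoeff_linear (ne_of_gt ha), hlWv]
      have hp0 : W (n + 2) ≠ 0 := by
        intro h
        have h12 : (W (n + 2)).leadingCoeff ≠ 0 := by rw [hleadp]; positivity
        exact leadingCoeff_ne_zero.mp h12 h
      have htend : Filter.Tendsto (fun x => eval x (W (n + 2))) Filter.atTop Filter.atTop := by
        apply Polynomial.tendsto_atTop_of_leadingCoeff_nonneg
        · rw [hdegp]; exact_mod_cast (by omega : 0 < n + 2)
        · rw [hleadp]; positivity
      obtain ⟨M, hM1, hM2⟩ :=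
        ((htend.eventually_gt_atTop 0).and (Filter.eventually_gt_atTop (v (Fin.last n)))).exists
      have hlastneg : eval (v (Fin.last n)) (W (n + 2)) < 0 := by
        have h5 := hsign (Fin.last n)
        rw [Fin.val_last, show n + 1 - n = 1 by omega, pow_one] at h5
        linarith
      obtain ⟨wtop, hwt1, hwt2⟩ :=
        stmt13_ivt (W (n + 2)) hM2 (mul_neg_of_neg_of_pos hlastneg hM1)
      set w : Fin (n + 1) → ℝ := fun i => if h : (i : ℕ) < n then g ⟨(i : ℕ), h⟩ else wtop
        with hwdef
      have hwval : ∀ i : Fin (n + 1),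
          w i = if h' : (i : ℕ) < n then g ⟨(i : ℕ), h'⟩ else wtop := fun i => rfl
      have hvw : ∀ i : Fin (n + 1), v i < w i := by
        intro i
        by_cases h : (i : ℕ) < n
        · rw [hwval i, dif_pos h]
          have h6 : i = (⟨(i : ℕ), h⟩ : Fin n).castSucc := by ext; simp
          conv_lhs => rw [h6]
          exact (hgmem _).1
        · rw [hwval i, dif_neg h]
          have hin : (i : ℕ) = n := by have := i.isLt; omega
          have h6 : i = Fin.last n := Fin.ext (by simp [Fin.val_last, hin])
          rw [h6]; exact hwt1.1
      have hwv : ∀ i : Fin n, w i.castSucc < v i.succ := by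
        intro i
        have h : ((i.castSucc : Fin (n + 1)) : ℕ) < n := by simp
        rw [hwval i.castSucc, dif_pos h]
        have h6 : (⟨((i.castSucc : Fin (n + 1)) : ℕ), h⟩ : Fin n) = i := by ext; simp
        rw [h6]; exact (hgmem i).2
      have hwmono : StrictMono w := by
        intro i j hij
        have hij' : (i : ℕ) < (j : ℕ) := hij
        by_cases hj : (j : ℕ) < n
        · have hi : (i : ℕ) < n := by omega
          rw [hwval i, hwval j, dif_pos hi, dif_pos hj]
          have hmid : v (⟨(i : ℕ), hi⟩ : Fin n).succ ≤ v (⟨(j : ℕ), hj⟩ : Fin n).castSucc :=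
            hv.monotone (by rw [Fin.le_def]; simp; omega)
          linarith [(hgmem ⟨(i : ℕ), hi⟩).2, (hgmem ⟨(j : ℕ), hj⟩).1]
        · have hi : (i : ℕ) < n := by omega
          rw [hwval i, hwval j, dif_pos hi, dif_neg hj]
          have hmid : v (⟨(i : ℕ), hi⟩ : Fin n).succ ≤ v (Fin.last n) :=
            hv.monotone (by rw [Fin.le_def]; simp [Fin.val_last]; omega)
          linarith [(hgmem ⟨(i : ℕ), hi⟩).2, hwt1.1]
      have hwroot : ∀ i : Fin (n + 1), eval (w i) (W (n + 2)) = 0 := by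
        intro i
        by_cases h : (i : ℕ) < n
        · rw [hwval i, dif_pos h]; exact hg2 _
        · rw [hwval i, dif_neg h]; exact hwt2
      -- divide out the n+1 found roots
      have hD : (∏ i : Fin (n + 1), (X - C (w i))) ∣ W (n + 2) := by
        have hnodup : (Multiset.map w Finset.univ.val).Nodup :=
          Finset.univ.nodup.map hwmono.injective
        have hle : Multiset.map w Finset.univ.val ≤ (W (n + 2)).roots := by
          rw [Multiset.le_iff_subset hnodup]
          intro x hx
          obtain ⟨i, _, rfl⟩ := Multiset.mem_map.1 hx
          exact (mem_roots hp0).2 (hwroot i)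
        have h7 := (Multiset.prod_X_sub_C_dvd_iff_le_roots hp0 _).2 hle
        rw [Finset.prod_eq_multiset_prod]
        simpa [Multiset.map_map, Function.comp, Function.comp_def] using h7
      obtain ⟨q, hq⟩ := hD
      have hDm : (∏ i : Fin (n + 1), (X - C (w i))).Monic :=
        monic_prod_of_monic _ _ fun _ _ => monic_X_sub_C _
      have hDdeg : (∏ i : Fin (n + 1), (X - C (w i))).natDegree = n + 1 := by
        rw [natDegree_prod _ _ fun j _ => X_sub_C_ne_zero _]
        simp
      have hq0 : q ≠ 0 := by rintro rfl; rw [mul_zero] at hq; exact hp0 hq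
      have hqdeg : q.natDegree = 1 := by
        have h1 : (W (n + 2)).natDegree = n + 2 := natDegree_eq_of_degree_eq_some hdegp
        have h2 := natDegree_mul hDm.ne_zero hq0
        rw [← hq, h1, hDdeg] at h2
        omega
      have hq1pos : 0 < q.coeff 1 := by
        have h8 : q.leadingCoeff = q.coeff 1 := by rw [leadingCoeff, hqdeg]
        have h9 : (W (n + 2)).leadingCoeff = q.leadingCoeff := by
          rw [hq, leadingCoeff_mul, hDm.leadingCoeff, one_mul]
        rw [← h8, ← h9, hleadp]
        positivity
      set q1 := q.coeff 1 with hq1def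
      set r := -(q.coeff 0) / q1 with hr
      have hqfact : q = C q1 * (X - C r) := by
        have h1 := eq_X_add_C_of_natDegree_le_one (le_of_eq hqdeg)
        rw [mul_sub, ← C_mul, show q1 * r = -(q.coeff 0) by
          rw [hr]; field_simp]
        rw [map_neg, sub_neg_eq_add]
        exact h1
      have hfact : W (n + 2) = C q1 * ∏ i : Fin (n + 2), (X - C (Fin.cons r w i)) := by
        rw [Fin.prod_univ_succ]
        simp only [Fin.cons_zero, Fin.cons_succ]
        rw [hq, hqfact]; ring
      -- show r < v 0
      have hev0 : eval (v 0) (W (n + 2))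
          = q1 * ((v 0 - r) * ∏ i : Fin (n + 1), (v 0 - w i)) := by
        rw [hq, hqfact]
        simp [eval_prod]
        ring
      have hPsign : 0 < (-1 : ℝ) ^ (n + 1) * ∏ i : Fin (n + 1), (v 0 - w i) := by
        have := stmt13_sign w (v 0) (k := 0) (fun j hj => absurd hj (by omega))
          (fun j _ => lt_of_le_of_lt (hv.monotone (Fin.zero_le j)) (hvw j))
        simpa using this
      have hs0 : 0 < (-1 : ℝ) ^ (n + 1) * eval (v 0) (W (n + 2)) := by
        have := hsign 0
        simpa using this
      have hEP := stmt13_spos hs0 hPsign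
      have hrv0 : r < v 0 := by
        by_contra hcon
        push_neg at hcon
        rw [hev0] at hEP
        set P := ∏ i : Fin (n + 1), (v 0 - w i) with hP
        have h10 : q1 * ((v 0 - r) * P) * P = (q1 * (v 0 - r)) * P ^ 2 := by ring
        rw [h10] at hEP
        have h11 : q1 * (v 0 - r) ≤ 0 :=
          mul_nonpos_of_nonneg_of_nonpos hq1pos.le (by linarith)
        nlinarith [sq_nonneg P]
      -- assemble
      refine ⟨(v, Fin.cons r w), hv, ?_, ⟨cv, hcv, hWv⟩, ⟨q1, hq1pos, hfact⟩, ?_⟩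
      · show StrictMono (Fin.cons r w : Fin (n + 2) → ℝ)
        rw [Fin.strictMono_iff_lt_succ]
        intro k
        induction k using Fin.cases with
        | zero =>
            simp only [Fin.castSucc_zero, Fin.cons_zero, Fin.succ_zero_eq_one]
            have : (1 : Fin (n + 2)) = (0 : Fin (n + 1)).succ := rfl
            rw [this, Fin.cons_succ]
            exact lt_trans hrv0 (hvw 0)
        | succ j =>
            rw [← Fin.succ_castSucc, Fin.cons_succ, Fin.cons_succ]
            exact hwmono (Fin.castSucc_lt_succ (i := j))
      · intro i
        show (Fin.cons r w : Fin (n + 2) → ℝ) i.castSucc < v i ∧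
          v i < (Fin.cons r w : Fin (n + 2) → ℝ) i.succ
        constructor
        · induction i using Fin.cases with
          | zero => simpa [Fin.castSucc_zero, Fin.cons_zero] using hrv0
          | succ j =>
              rw [← Fin.succ_castSucc, Fin.cons_succ]
              exact hwv j
        · rw [Fin.cons_succ]
          exact hvw i


theorem stmt13 (a b d : ℝ) (ha : 0 < a) (hb : 0 ≤ b) (hd : d < 0)
    (W : ℕ → Polynomial ℝ)
    (hW0 : W 0 = 1) (hW1 : W 1 = X)
    (hrec : ∀ n, 2 ≤ n → W n = (C a * X + C b) * W (n - 1) + C d * W (n - 2)) :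
    ∃ ξ : (n : ℕ) → Fin n → ℝ,
      (∀ n, StrictMono (ξ n)) ∧
      (∀ n, ∀ x : ℝ, (W n).eval x = 0 ↔ ∃ i, x = ξ n i) ∧
      (∀ n, ∀ i : Fin n, ξ (n + 1) i.castSucc < ξ n i ∧ ξ n i < ξ (n + 1) i.succ) := by
  choose F hF using stmt13_main a b d ha hb hd W hW0 hW1 hrec
  have hroots : ∀ n, ∀ x : ℝ, (W n).eval x = 0 ↔ ∃ i, x = (F n).1 i := by
    intro n x
    obtain ⟨-, -, ⟨c, hc, hWn⟩, -, -⟩ := hF n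
    rw [hWn]
    exact stmt13_rooteq (ne_of_gt hc) _ x
  have hsnd : ∀ n, (F n).2 = (F (n + 1)).1 := by
    intro n
    obtain ⟨-, h2, -, ⟨c, hc, hWn⟩, -⟩ := hF n
    refine stmt13_uniq h2 (hF (n + 1)).1 fun x => ?_
    calc (∃ i, x = (F n).2 i) ↔ eval x (W (n + 1)) = 0 := by
          rw [hWn]; exact (stmt13_rooteq (ne_of_gt hc) _ x).symm
      _ ↔ ∃ i, x = (F (n + 1)).1 i := hroots (n + 1) x
  refine ⟨fun n => (F n).1, fun n => (hF n).1, hroots, ?_⟩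
  intro n i
  have h5 := (hF n).2.2.2.2 i
  rw [hsnd n] at h5
  exact h5
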